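/- Let b > 1, m > b − 1, let ℓ̄ > 0, let μ be a Borel probability measure on [0, ℓ̄], and let G : [0,1] → [0,1] be L-Lipschitz with L·max(ℓ̄ − (b−1), b−1) < 1 + m − b. For a continuous function s : [0, ℓ̄] → [0,1], define T(s)(ℓ) = 1 − (1+m−b)/(m + (ℓ − (b−1))·∫₀^ℓ̄ G(s(t)) dμ(t)). Then: (i) for every such s, the denominator m + (ℓ − (b−1))·∫ G(s) dμ is at least 1 + m − b > 0 for all ℓ ∈ [0, ℓ̄], and T(s) is again a continuous function from [0, ℓ̄] to [0,1]; (ii) T is a contraction in the supremum norm with constant L·max(ℓ̄ − (b−1), b−1)/(1+m−b) < 1; (iii) T has a unique fixed point s* among continuous functions [0, ℓ̄] → [0,1]; and (iv) s* is nondecreasing in ℓ, and strictly increasing in ℓ whenever ∫₀^ℓ̄ G(s*(t)) dμ(t) > 0. -/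

import Mathlib

open MeasureTheory

noncomputable def uA (b m : ℝ) (x l : ℝ) : ℝ := 1 - (1 + m - b) / (m + (l - (b - 1)) * x)

noncomputable def phiA (b m lbar : ℝ) (μ : Measure ℝ) (G : ℝ → ℝ) (x : ℝ) : ℝ :=
  ∫ t in Set.Icc 0 lbar, G (uA b m x t) ∂μ

section Aux
variable {b m lbar : ℝ}

lemma den_ge (hb : 1 < b) (hm : b - 1 < m) {x l : ℝ} (hx : x ∈ Set.Icc (0:ℝ) 1)
    (hl : l ∈ Set.Icc 0 lbar) : 1 + m - b ≤ m + (l - (b - 1)) * x := by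
  obtain ⟨hx0, hx1⟩ := hx
  obtain ⟨hl0, _⟩ := hl
  rcases le_total (b - 1) l with h | h
  · nlinarith [mul_nonneg (by linarith : (0:ℝ) ≤ l - (b - 1)) hx0]
  · nlinarith [mul_le_mul_of_nonpos_left hx1 (by linarith : l - (b - 1) ≤ 0)]

lemma uA_mem (hb : 1 < b) (hm : b - 1 < m) {x l : ℝ} (hx : x ∈ Set.Icc (0:ℝ) 1)
    (hl : l ∈ Set.Icc 0 lbar) : uA b m x l ∈ Set.Icc (0:ℝ) 1 := by
  have hc : (0:ℝ) < 1 + m - b := by linarith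
  have hD := den_ge hb hm hx hl
  have hDpos : (0:ℝ) < m + (l - (b - 1)) * x := lt_of_lt_of_le hc hD
  constructor
  · have : (1 + m - b) / (m + (l - (b - 1)) * x) ≤ 1 := (div_le_one hDpos).2 hD
    simp only [uA]; linarith
  · have : 0 ≤ (1 + m - b) / (m + (l - (b - 1)) * x) := by positivity
    simp only [uA]; linarith

lemma abs_sub_max {l : ℝ} (hl : l ∈ Set.Icc 0 lbar) :
    |l - (b - 1)| ≤ max (lbar - (b - 1)) (b - 1) := by
  obtain ⟨hl0, hl1⟩ := hl
  rcases le_total (b - 1) l with h | h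
  · rw [abs_of_nonneg (by linarith)]
    exact le_trans (by linarith) (le_max_left _ _)
  · rw [abs_of_nonpos (by linarith)]
    exact le_trans (by linarith) (le_max_right _ _)

lemma uA_diff (hb : 1 < b) (hm : b - 1 < m) {x y l : ℝ} (hx : x ∈ Set.Icc (0:ℝ) 1)
    (hy : y ∈ Set.Icc (0:ℝ) 1) (hl : l ∈ Set.Icc 0 lbar) :
    |uA b m x l - uA b m y l| ≤
      max (lbar - (b - 1)) (b - 1) / (1 + m - b) * |x - y| := by
  have hc : (0:ℝ) < 1 + m - b := by linarith
  have hDx := den_ge hb hm hx hl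
  have hDy := den_ge hb hm hy hl
  have hDxp : (0:ℝ) < m + (l - (b - 1)) * x := lt_of_lt_of_le hc hDx
  have hDyp : (0:ℝ) < m + (l - (b - 1)) * y := lt_of_lt_of_le hc hDy
  have hM : (0:ℝ) < max (lbar - (b - 1)) (b - 1) :=
    lt_of_lt_of_le (by linarith) (le_max_right _ _)
  have key : uA b m x l - uA b m y l =
      (1 + m - b) * ((l - (b - 1)) * (x - y)) /
        ((m + (l - (b - 1)) * x) * (m + (l - (b - 1)) * y)) := by
    simp only [uA]
    field_simp
    ring
  rw [key, abs_div]
  rw [abs_of_pos (mul_pos hDxp hDyp)]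
  have h1 : |(1 + m - b) * ((l - (b - 1)) * (x - y))| ≤
      (1 + m - b) * (max (lbar - (b - 1)) (b - 1) * |x - y|) := by
    rw [abs_mul, abs_mul, abs_of_pos hc]
    gcongr
    exact abs_sub_max hl
  calc |(1 + m - b) * ((l - (b - 1)) * (x - y))| /
        ((m + (l - (b - 1)) * x) * (m + (l - (b - 1)) * y))
      ≤ (1 + m - b) * (max (lbar - (b - 1)) (b - 1) * |x - y|) /
        ((1 + m - b) * (1 + m - b)) := by gcongr
    _ = max (lbar - (b - 1)) (b - 1) / (1 + m - b) * |x - y| := by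
        field_simp

lemma uA_continuousOn (hb : 1 < b) (hm : b - 1 < m) {x : ℝ} (hx : x ∈ Set.Icc (0:ℝ) 1) :
    ContinuousOn (uA b m x) (Set.Icc 0 lbar) := by
  have hc : (0:ℝ) < 1 + m - b := by linarith
  apply ContinuousOn.sub continuousOn_const
  apply ContinuousOn.div continuousOn_const
  · fun_prop
  · intro l hl
    exact ne_of_gt (lt_of_lt_of_le hc (den_ge hb hm hx hl))

end Aux

section Int
variable {lbar : ℝ} {μ : Measure ℝ} [IsProbabilityMeasure μ]

lemma meas_Icc_one (hsupp : μ (Set.Icc 0 lbar)ᶜ = 0) : μ (Set.Icc 0 lbar) = 1 := by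
  have h := measure_add_measure_compl (μ := μ) (measurableSet_Icc (a := (0:ℝ)) (b := lbar))
  rw [hsupp, add_zero] at h
  rw [h, measure_univ]

lemma int_mem (hsupp : μ (Set.Icc 0 lbar)ᶜ = 0) {f : ℝ → ℝ}
    (hf : ContinuousOn f (Set.Icc 0 lbar))
    (hr : ∀ t ∈ Set.Icc 0 lbar, f t ∈ Set.Icc (0:ℝ) 1) :
    (∫ t in Set.Icc 0 lbar, f t ∂μ) ∈ Set.Icc (0:ℝ) 1 := by
  have hint : IntegrableOn f (Set.Icc 0 lbar) μ :=
    hf.integrableOn_compact isCompact_Icc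
  constructor
  · exact setIntegral_nonneg measurableSet_Icc (fun t ht => (hr t ht).1)
  · calc ∫ t in Set.Icc 0 lbar, f t ∂μ
        ≤ ∫ _t in Set.Icc 0 lbar, (1:ℝ) ∂μ :=
          setIntegral_mono_on hint (integrableOn_const (measure_ne_top _ _) (by simp))
            measurableSet_Icc (fun t ht => (hr t ht).2)
      _ = 1 := by
          rw [setIntegral_const, Measure.real, meas_Icc_one hsupp]; simp

lemma int_diff_le (hsupp : μ (Set.Icc 0 lbar)ᶜ = 0) {f g : ℝ → ℝ} {B : ℝ}
    (hf : IntegrableOn f (Set.Icc 0 lbar) μ) (hg : IntegrableOn g (Set.Icc 0 lbar) μ)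
    (hB : ∀ t ∈ Set.Icc 0 lbar, |f t - g t| ≤ B) :
    |(∫ t in Set.Icc 0 lbar, f t ∂μ) - ∫ t in Set.Icc 0 lbar, g t ∂μ| ≤ B := by
  rw [← integral_sub hf hg]
  have := norm_setIntegral_le_of_norm_le_const (μ := μ) (s := Set.Icc 0 lbar)
    (f := fun t => f t - g t) (C := B)
    (by rw [meas_Icc_one hsupp]; exact ENNReal.one_lt_top)
    (fun t ht => by simpa using hB t ht)
  rw [Measure.real, meas_Icc_one hsupp] at this
  simpa using this

end Int

/-- for `b > 1`, `m > b − 1`, `μ` a Borel probability measure on `[0, ℓ̄]`,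
and `G : [0,1] → [0,1]` an `L`-Lipschitz function with
`L·max(ℓ̄ − (b−1), b−1) < 1 + m − b`, the operator
`T(s)(ℓ) = 1 − (1+m−b)/(m + (ℓ − (b−1))·∫₀^ℓ̄ G(s t) dμ(t))`
(i) maps continuous `[0,ℓ̄] → [0,1]` functions to continuous `[0,ℓ̄] → [0,1]` functions,
with denominator at least `1 + m − b > 0`; (ii) is a sup-norm contraction with constant
`L·max(ℓ̄ − (b−1), b−1)/(1+m−b) < 1`; (iii) has a unique fixed point `s*` among
continuous functions `[0, ℓ̄] → [0,1]`; and (iv) `s*` is nondecreasing, and strictly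
increasing whenever `∫₀^ℓ̄ G(s* t) dμ(t) > 0`. -/
theorem stmt8 (b m lbar : ℝ) (L : NNReal) (μ : Measure ℝ) [IsProbabilityMeasure μ]
    (G : ℝ → ℝ) (T : (ℝ → ℝ) → (ℝ → ℝ))
    (hb : 1 < b) (hm : b - 1 < m) (hlbar : 0 < lbar)
    (hsupp : μ (Set.Icc 0 lbar)ᶜ = 0)
    (hGlip : LipschitzOnWith L G (Set.Icc 0 1))
    (hGmap : Set.MapsTo G (Set.Icc 0 1) (Set.Icc 0 1))
    (hL : (L : ℝ) * max (lbar - (b - 1)) (b - 1) < 1 + m - b)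
    (hT : ∀ s : ℝ → ℝ, ∀ l : ℝ,
      T s l = 1 - (1 + m - b) /
        (m + (l - (b - 1)) * ∫ t in Set.Icc 0 lbar, G (s t) ∂μ)) :
    (∀ s : ℝ → ℝ, ContinuousOn s (Set.Icc 0 lbar) →
      (∀ t ∈ Set.Icc 0 lbar, s t ∈ Set.Icc (0 : ℝ) 1) →
      (0 < 1 + m - b) ∧
      (∀ l ∈ Set.Icc 0 lbar,
        1 + m - b ≤ m + (l - (b - 1)) * ∫ t in Set.Icc 0 lbar, G (s t) ∂μ) ∧
      ContinuousOn (T s) (Set.Icc 0 lbar) ∧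
      (∀ l ∈ Set.Icc 0 lbar, T s l ∈ Set.Icc (0 : ℝ) 1)) ∧
    ((L : ℝ) * max (lbar - (b - 1)) (b - 1) / (1 + m - b) < 1) ∧
    (∀ s₁ s₂ : ℝ → ℝ,
      ContinuousOn s₁ (Set.Icc 0 lbar) → (∀ t ∈ Set.Icc 0 lbar, s₁ t ∈ Set.Icc (0 : ℝ) 1) →
      ContinuousOn s₂ (Set.Icc 0 lbar) → (∀ t ∈ Set.Icc 0 lbar, s₂ t ∈ Set.Icc (0 : ℝ) 1) →
      ∀ C : ℝ, 0 ≤ C → (∀ t ∈ Set.Icc 0 lbar, |s₁ t - s₂ t| ≤ C) →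
        ∀ l ∈ Set.Icc 0 lbar,
          |T s₁ l - T s₂ l| ≤
            (L : ℝ) * max (lbar - (b - 1)) (b - 1) / (1 + m - b) * C) ∧
    (∃ s : ℝ → ℝ,
      (ContinuousOn s (Set.Icc 0 lbar) ∧
        (∀ t ∈ Set.Icc 0 lbar, s t ∈ Set.Icc (0 : ℝ) 1) ∧
        (∀ l ∈ Set.Icc 0 lbar, T s l = s l)) ∧
      (∀ s' : ℝ → ℝ, ContinuousOn s' (Set.Icc 0 lbar) →
        (∀ t ∈ Set.Icc 0 lbar, s' t ∈ Set.Icc (0 : ℝ) 1) →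
        (∀ l ∈ Set.Icc 0 lbar, T s' l = s' l) →
        ∀ l ∈ Set.Icc 0 lbar, s' l = s l) ∧
      MonotoneOn s (Set.Icc 0 lbar) ∧
      ((0 < ∫ t in Set.Icc 0 lbar, G (s t) ∂μ) → StrictMonoOn s (Set.Icc 0 lbar))) := by
  have hc : (0:ℝ) < 1 + m - b := by linarith
  have hM : (0:ℝ) < max (lbar - (b - 1)) (b - 1) :=
    lt_of_lt_of_le (by linarith) (le_max_right _ _)
  -- integral of G ∘ s is in [0,1]
  have hGScont : ∀ s : ℝ → ℝ, ContinuousOn s (Set.Icc 0 lbar) →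
      (∀ t ∈ Set.Icc 0 lbar, s t ∈ Set.Icc (0:ℝ) 1) →
      ContinuousOn (fun t => G (s t)) (Set.Icc 0 lbar) :=
    fun s hs hr => hGlip.continuousOn.comp hs (fun t ht => hr t ht)
  have hImem : ∀ s : ℝ → ℝ, ContinuousOn s (Set.Icc 0 lbar) →
      (∀ t ∈ Set.Icc 0 lbar, s t ∈ Set.Icc (0:ℝ) 1) →
      (∫ t in Set.Icc 0 lbar, G (s t) ∂μ) ∈ Set.Icc (0:ℝ) 1 :=
    fun s hs hr => int_mem hsupp (hGScont s hs hr) (fun t ht => hGmap (hr t ht))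
  -- properties of phi
  have hphimem : ∀ x ∈ Set.Icc (0:ℝ) 1, phiA b m lbar μ G x ∈ Set.Icc (0:ℝ) 1 := by
    intro x hx
    exact int_mem hsupp (hGScont _ (uA_continuousOn hb hm hx) (fun t ht => uA_mem hb hm hx ht))
      (fun t ht => hGmap (uA_mem hb hm hx ht))
  have hGint : ∀ x ∈ Set.Icc (0:ℝ) 1,
      IntegrableOn (fun t => G (uA b m x t)) (Set.Icc 0 lbar) μ := by
    intro x hx
    exact (hGScont _ (uA_continuousOn hb hm hx) (fun t ht => uA_mem hb hm hx ht)).integrableOn_compact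
      isCompact_Icc
  have hphidiff : ∀ x ∈ Set.Icc (0:ℝ) 1, ∀ y ∈ Set.Icc (0:ℝ) 1,
      |phiA b m lbar μ G x - phiA b m lbar μ G y| ≤
        (L : ℝ) * max (lbar - (b - 1)) (b - 1) / (1 + m - b) * |x - y| := by
    intro x hx y hy
    have hbound : ∀ t ∈ Set.Icc 0 lbar, |G (uA b m x t) - G (uA b m y t)| ≤
        (L : ℝ) * (max (lbar - (b - 1)) (b - 1) / (1 + m - b) * |x - y|) := by
      intro t ht
      have h1 : dist (G (uA b m x t)) (G (uA b m y t)) ≤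
          (L : ℝ) * dist (uA b m x t) (uA b m y t) :=
        hGlip.dist_le_mul _ (uA_mem hb hm hx ht) _ (uA_mem hb hm hy ht)
      rw [Real.dist_eq, Real.dist_eq] at h1
      calc |G (uA b m x t) - G (uA b m y t)| ≤ (L : ℝ) * |uA b m x t - uA b m y t| := h1
        _ ≤ (L : ℝ) * (max (lbar - (b - 1)) (b - 1) / (1 + m - b) * |x - y|) := by
            gcongr
            exact uA_diff hb hm hx hy ht
    have := int_diff_le hsupp (hGint x hx) (hGint y hy) hbound
    calc |phiA b m lbar μ G x - phiA b m lbar μ G y|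
        ≤ (L : ℝ) * (max (lbar - (b - 1)) (b - 1) / (1 + m - b) * |x - y|) := this
      _ = (L : ℝ) * max (lbar - (b - 1)) (b - 1) / (1 + m - b) * |x - y| := by ring
  have hk1 : (L : ℝ) * max (lbar - (b - 1)) (b - 1) / (1 + m - b) < 1 :=
    (div_lt_one hc).2 hL
  have hk0 : (0:ℝ) ≤ (L : ℝ) * max (lbar - (b - 1)) (b - 1) / (1 + m - b) := by positivity
  -- continuity of phi, fixed point via IVT
  have hphicont : ContinuousOn (phiA b m lbar μ G) (Set.Icc 0 1) := by
    have hlip : LipschitzOnWith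
        ((L : ℝ) * max (lbar - (b - 1)) (b - 1) / (1 + m - b)).toNNReal
        (phiA b m lbar μ G) (Set.Icc 0 1) := by
      apply LipschitzOnWith.of_dist_le_mul
      intro x hx y hy
      rw [Real.dist_eq, Real.dist_eq, Real.coe_toNNReal _ hk0]
      exact hphidiff x hx y hy
    exact hlip.continuousOn
  have hgcont : ContinuousOn (fun x => phiA b m lbar μ G x - x) (Set.Icc 0 1) :=
    hphicont.sub continuousOn_id
  have h0mem : (0:ℝ) ∈ Set.Icc (phiA b m lbar μ G 1 - 1) (phiA b m lbar μ G 0 - 0) := by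
    constructor
    · have := (hphimem 1 (by norm_num)).2; linarith
    · have := (hphimem 0 (by norm_num)).1; linarith
  obtain ⟨xs, hxsmem, hgxs⟩ :=
    (intermediate_value_Icc' (by norm_num : (0:ℝ) ≤ 1) hgcont) h0mem
  have hfix : phiA b m lbar μ G xs = xs := by
    have : phiA b m lbar μ G xs - xs = 0 := hgxs
    linarith
  have hInts : (∫ t in Set.Icc 0 lbar, G (uA b m xs t) ∂μ) = xs := hfix
  have hscont : ContinuousOn (uA b m xs) (Set.Icc 0 lbar) := uA_continuousOn hb hm hxsmem
  have hsrange : ∀ t ∈ Set.Icc 0 lbar, uA b m xs t ∈ Set.Icc (0:ℝ) 1 :=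
    fun t ht => uA_mem hb hm hxsmem ht
  have hTfix : ∀ l : ℝ, T (uA b m xs) l = uA b m xs l := by
    intro l
    rw [hT, hInts]
    rfl
  refine ⟨?_, hk1, ?_, ?_⟩
  · -- part (i)
    intro s hs hr
    have hI := hImem s hs hr
    refine ⟨hc, fun l hl => den_ge hb hm hI hl, ?_, ?_⟩
    · exact (uA_continuousOn hb hm hI).congr (fun l _ => by rw [hT]; rfl)
    · intro l hl
      rw [hT]
      exact uA_mem hb hm hI hl
  · -- part (ii): contraction estimate
    intro s₁ s₂ h1c h1r h2c h2r C hC hCb l hl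
    have hI1 := hImem s₁ h1c h1r
    have hI2 := hImem s₂ h2c h2r
    have hint1 : IntegrableOn (fun t => G (s₁ t)) (Set.Icc 0 lbar) μ :=
      (hGScont s₁ h1c h1r).integrableOn_compact isCompact_Icc
    have hint2 : IntegrableOn (fun t => G (s₂ t)) (Set.Icc 0 lbar) μ :=
      (hGScont s₂ h2c h2r).integrableOn_compact isCompact_Icc
    have hd : |(∫ t in Set.Icc 0 lbar, G (s₁ t) ∂μ) - ∫ t in Set.Icc 0 lbar, G (s₂ t) ∂μ| ≤
        (L : ℝ) * C := by
      apply int_diff_le hsupp hint1 hint2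
      intro t ht
      have h1 : dist (G (s₁ t)) (G (s₂ t)) ≤ (L : ℝ) * dist (s₁ t) (s₂ t) :=
        hGlip.dist_le_mul _ (h1r t ht) _ (h2r t ht)
      rw [Real.dist_eq, Real.dist_eq] at h1
      calc |G (s₁ t) - G (s₂ t)| ≤ (L : ℝ) * |s₁ t - s₂ t| := h1
        _ ≤ (L : ℝ) * C := by gcongr; exact hCb t ht
    have hud := uA_diff hb hm hI1 hI2 hl
    rw [hT, hT]
    calc |(1 - (1 + m - b) / (m + (l - (b - 1)) * ∫ t in Set.Icc 0 lbar, G (s₁ t) ∂μ)) -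
          (1 - (1 + m - b) / (m + (l - (b - 1)) * ∫ t in Set.Icc 0 lbar, G (s₂ t) ∂μ))|
        ≤ max (lbar - (b - 1)) (b - 1) / (1 + m - b) *
            |(∫ t in Set.Icc 0 lbar, G (s₁ t) ∂μ) - ∫ t in Set.Icc 0 lbar, G (s₂ t) ∂μ| := hud
      _ ≤ max (lbar - (b - 1)) (b - 1) / (1 + m - b) * ((L : ℝ) * C) := by gcongr
      _ = (L : ℝ) * max (lbar - (b - 1)) (b - 1) / (1 + m - b) * C := by ring
  · -- part (iii)/(iv)
    refine ⟨uA b m xs, ⟨hscont, hsrange, fun l _ => hTfix l⟩, ?_, ?_, ?_⟩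
    · -- uniqueness
      intro s' h'c h'r h'fix l hl
      have hI' := hImem s' h'c h'r
      have heq' : ∀ t ∈ Set.Icc 0 lbar,
          s' t = uA b m (∫ u in Set.Icc 0 lbar, G (s' u) ∂μ) t := by
        intro t ht
        rw [← h'fix t ht, hT]
        rfl
      have hphiI' : phiA b m lbar μ G (∫ u in Set.Icc 0 lbar, G (s' u) ∂μ) =
          ∫ u in Set.Icc 0 lbar, G (s' u) ∂μ := by
        unfold phiA
        exact setIntegral_congr_fun measurableSet_Icc
          (fun t ht => by rw [← heq' t ht])
      have hd := hphidiff _ hI' xs hxsmem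
      rw [hphiI', hfix] at hd
      have habs : |(∫ u in Set.Icc 0 lbar, G (s' u) ∂μ) - xs| = 0 := by
        nlinarith [abs_nonneg ((∫ u in Set.Icc 0 lbar, G (s' u) ∂μ) - xs)]
      have hIeq : (∫ u in Set.Icc 0 lbar, G (s' u) ∂μ) = xs :=
        sub_eq_zero.1 (abs_eq_zero.1 habs)
      rw [heq' l hl, hIeq]
    · -- monotone
      intro l1 hl1 l2 hl2 h12
      have hx0 := hxsmem.1
      have hD1 : (0:ℝ) < m + (l1 - (b - 1)) * xs := lt_of_lt_of_le hc (den_ge hb hm hxsmem hl1)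
      have hD2 : (0:ℝ) < m + (l2 - (b - 1)) * xs := lt_of_lt_of_le hc (den_ge hb hm hxsmem hl2)
      have hD12 : m + (l1 - (b - 1)) * xs ≤ m + (l2 - (b - 1)) * xs := by
        nlinarith [mul_nonneg (sub_nonneg.2 h12) hx0]
      have : (1 + m - b) / (m + (l2 - (b - 1)) * xs) ≤
          (1 + m - b) / (m + (l1 - (b - 1)) * xs) := by gcongr
      simp only [uA]
      linarith
    · -- strict monotone
      intro hpos l1 hl1 l2 hl2 h12
      have hxpos : 0 < xs := by rwa [hInts] at hpos
      have hD1 : (0:ℝ) < m + (l1 - (b - 1)) * xs := lt_of_lt_of_le hc (den_ge hb hm hxsmem hl1)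
      have hD2 : (0:ℝ) < m + (l2 - (b - 1)) * xs := lt_of_lt_of_le hc (den_ge hb hm hxsmem hl2)
      have hD12 : m + (l1 - (b - 1)) * xs < m + (l2 - (b - 1)) * xs := by
        nlinarith [mul_pos (sub_pos.2 h12) hxpos]
      have : (1 + m - b) / (m + (l2 - (b - 1)) * xs) <
          (1 + m - b) / (m + (l1 - (b - 1)) * xs) :=
        div_lt_div_of_pos_left hc hD1 hD12
      simp only [uA]
      linarith
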